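/- arXiv:2209.06489 — 4 statements merged into one kernel-verified Lean document; each statement's English description precedes it below -/
import Mathlib

section
/- Let α : ℝ≥0 → ℝ≥0 be continuous and positive definite (α(0)=0 and α(s)>0 for s>0). Then there exists a class KL function β_α (continuous in both arguments, β_α(·,t) strictly increasing with β_α(0,t)=0 for each t, β_α(s,·) nonincreasing and tending to 0 as t→∞) such that: for any T ∈ (0,∞], any continuous nonnegative function y : [0,T) → ℝ≥0 satisfying the upper-right Dini derivative inequality D⁺y(t) ≤ −α(y(t)) for all t ∈ [0,T), one has y(t) ≤ β_α(y(0), t) for all t ∈ [0,T). -/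
open Filter Topology Set MeasureTheory
open scoped NNReal ENNReal

/-- Upper right-hand Dini derivative (with values in the extended reals). -/
noncomputable def dini (y : ℝ → ℝ) (t : ℝ) : EReal :=
  Filter.limsup (fun h : ℝ => (((y (t + h) - y t) / h : ℝ) : EReal)) (𝓝[>] (0 : ℝ))

/-- Class KL functions. -/
def ClassKL (β : ℝ≥0 → ℝ≥0 → ℝ≥0) : Prop :=
  Continuous (fun p : ℝ≥0 × ℝ≥0 => β p.1 p.2) ∧
  (∀ t : ℝ≥0, StrictMono (fun s => β s t) ∧ β 0 t = 0) ∧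
  (∀ s : ℝ≥0, Antitone (β s) ∧ Filter.Tendsto (β s) Filter.atTop (𝓝 0))

noncomputable def gg (α : ℝ≥0 → ℝ≥0) (u : ℝ) : ℝ := min (α u.toNNReal : ℝ) u

noncomputable def Phi (α : ℝ≥0 → ℝ≥0) (s : ℝ) : ℝ := ∫ u in (1:ℝ)..s, (gg α u)⁻¹

variable {α : ℝ≥0 → ℝ≥0}

lemma gg_cont (hαc : Continuous α) : Continuous (gg α) :=
  (NNReal.continuous_coe.comp (hαc.comp continuous_real_toNNReal)).min continuous_id

lemma gg_pos (hαpos : ∀ s : ℝ≥0, 0 < s → 0 < α s) {u : ℝ} (hu : 0 < u) : 0 < gg α u :=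
  lt_min (by exact_mod_cast hαpos _ (Real.toNNReal_pos.2 hu)) hu

lemma gg_le_self {u : ℝ} : gg α u ≤ u := min_le_right _ _

lemma gg_le_alpha {u : ℝ} : gg α u ≤ (α u.toNNReal : ℝ) := min_le_left _ _

lemma gg_inv_contOn (hαc : Continuous α) (hαpos : ∀ s : ℝ≥0, 0 < s → 0 < α s) :
    ContinuousOn (fun u => (gg α u)⁻¹) (Ioi 0) :=
  ((gg_cont hαc).continuousOn).inv₀ (fun u hu => (gg_pos hαpos hu).ne')

lemma gg_ii (hαc : Continuous α) (hαpos : ∀ s : ℝ≥0, 0 < s → 0 < α s)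
    {a b : ℝ} (ha : 0 < a) (hb : 0 < b) :
    IntervalIntegrable (fun u => (gg α u)⁻¹) volume a b := by
  apply ((gg_inv_contOn hαc hαpos).mono _).intervalIntegrable
  intro x hx
  rcases le_total a b with h | h
  · rw [uIcc_of_le h] at hx; exact lt_of_lt_of_le ha hx.1
  · rw [uIcc_of_ge h] at hx; exact lt_of_lt_of_le hb hx.1

lemma Phi_sub (hαc : Continuous α) (hαpos : ∀ s : ℝ≥0, 0 < s → 0 < α s)
    {a b : ℝ} (ha : 0 < a) (hb : 0 < b) :
    Phi α b - Phi α a = ∫ u in a..b, (gg α u)⁻¹ := by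
  have := intervalIntegral.integral_add_adjacent_intervals
    (gg_ii hαc hαpos one_pos ha) (gg_ii hαc hαpos ha hb)
  unfold Phi; linarith

lemma Phi_incr_ge (hαc : Continuous α) (hαpos : ∀ s : ℝ≥0, 0 < s → 0 < α s)
    {a b M : ℝ} (ha : 0 < a) (hab : a ≤ b) (hM : ∀ u ∈ Icc a b, gg α u ≤ M) :
    (b - a) / M ≤ Phi α b - Phi α a := by
  have hb : 0 < b := lt_of_lt_of_le ha hab
  have hMpos : 0 < M := lt_of_lt_of_le (gg_pos hαpos hb) (hM b ⟨hab, le_rfl⟩)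
  rw [Phi_sub hαc hαpos ha hb]
  have : ∫ u in a..b, M⁻¹ ≤ ∫ u in a..b, (gg α u)⁻¹ := by
    apply intervalIntegral.integral_mono_on hab intervalIntegrable_const
      (gg_ii hαc hαpos ha hb)
    intro x hx
    exact inv_anti₀ (gg_pos hαpos (lt_of_lt_of_le ha hx.1)) (hM x hx)
  simpa [div_eq_mul_inv] using this.trans_eq' (by simp [mul_comm])

lemma Phi_strictMonoOn (hαc : Continuous α) (hαpos : ∀ s : ℝ≥0, 0 < s → 0 < α s) :
    StrictMonoOn (Phi α) (Ioi 0) := by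
  intro a ha b hb hab
  have h := Phi_incr_ge hαc hαpos (by exact ha) hab.le
    (fun u hu => gg_le_self.trans hu.2)
  have : 0 < (b - a) / b := div_pos (by linarith) hb
  linarith

lemma Phi_log_bound (hαc : Continuous α) (hαpos : ∀ s : ℝ≥0, 0 < s → 0 < α s)
    {u a : ℝ} (hu : 0 < u) (hua : u ≤ a) :
    Phi α u ≤ Phi α a + (Real.log u - Real.log a) := by
  have ha : 0 < a := lt_of_lt_of_le hu hua
  have hint : IntervalIntegrable (fun t : ℝ => t⁻¹) volume u a := by
    apply ((continuousOn_inv₀.mono (fun x hx => ?_)).intervalIntegrable)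
    rw [uIcc_of_le hua] at hx
    exact ne_of_gt (lt_of_lt_of_le hu hx.1)
  have h1 : ∫ t in u..a, t⁻¹ ≤ ∫ t in u..a, (gg α t)⁻¹ := by
    apply intervalIntegral.integral_mono_on hua hint (gg_ii hαc hαpos hu ha)
    intro x hx
    have hx0 : 0 < x := lt_of_lt_of_le hu hx.1
    exact inv_anti₀ (gg_pos hαpos hx0) gg_le_self
  rw [integral_inv_of_pos hu ha, Real.log_div (ne_of_gt ha) (ne_of_gt hu)] at h1
  have h2 := Phi_sub hαc hαpos hu ha
  linarith

lemma Phi_contAt (hαc : Continuous α) (hαpos : ∀ s : ℝ≥0, 0 < s → 0 < α s)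
    {s : ℝ} (hs : 0 < s) : ContinuousAt (Phi α) s := by
  have h : HasDerivAt (Phi α) ((gg α s)⁻¹) s := by
    apply intervalIntegral.integral_hasDerivAt_right (gg_ii hαc hαpos one_pos hs)
      ((gg_inv_contOn hαc hαpos).stronglyMeasurableAtFilter isOpen_Ioi s hs)
    exact (gg_inv_contOn hαc hαpos).continuousAt (Ioi_mem_nhds hs)
  exact h.continuousAt

/-- there are arbitrarily small points with arbitrarily negative Phi values -/
lemma Phi_exists_small (hαc : Continuous α) (hαpos : ∀ s : ℝ≥0, 0 < s → 0 < α s)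
    (x : ℝ) {s : ℝ} (hs : 0 < s) : ∃ u : ℝ, 0 < u ∧ u ≤ s ∧ Phi α u ≤ x := by
  set a := min s 1 with ha
  have ha0 : 0 < a := lt_min hs one_pos
  set u := min a (Real.exp (x - Phi α a + Real.log a)) with hudef
  have hu0 : 0 < u := lt_min ha0 (Real.exp_pos _)
  refine ⟨u, hu0, le_trans (min_le_left _ _) (min_le_left _ _), ?_⟩
  have hb := Phi_log_bound hαc hαpos hu0 (min_le_left _ _)
  have : Real.log u ≤ x - Phi α a + Real.log a := by
    calc Real.log u ≤ Real.log (Real.exp (x - Phi α a + Real.log a)) :=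
      Real.log_le_log hu0 (min_le_right _ _)
    _ = _ := Real.log_exp _
  linarith

noncomputable def cc (α : ℝ≥0 → ℝ≥0) (s t : ℝ) : ℝ :=
  sSup {u : ℝ | 0 < u ∧ Phi α u ≤ Phi α s - t}

lemma cc_isGreatest (hαc : Continuous α) (hαpos : ∀ s : ℝ≥0, 0 < s → 0 < α s)
    {s t : ℝ} (hs : 0 < s) (ht : 0 ≤ t) :
    IsGreatest {u : ℝ | 0 < u ∧ Phi α u ≤ Phi α s - t} (cc α s t) ∧
      Phi α (cc α s t) = Phi α s - t := by
  obtain ⟨u0, hu00, hu0s, hu0⟩ := Phi_exists_small hαc hαpos (Phi α s - t) hs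
  -- IVT on [u0, s]
  have hPc : ContinuousOn (Phi α) (Icc u0 s) := fun z hz =>
    (Phi_contAt hαc hαpos (lt_of_lt_of_le hu00 hz.1)).continuousWithinAt
  have hmem : Phi α s - t ∈ Icc (Phi α u0) (Phi α s) := ⟨hu0, by linarith⟩
  obtain ⟨c, hc, hPhic⟩ := intermediate_value_Icc hu0s hPc hmem
  have hc0 : 0 < c := lt_of_lt_of_le hu00 hc.1
  have hgreat : IsGreatest {u : ℝ | 0 < u ∧ Phi α u ≤ Phi α s - t} c := by
    constructor
    · exact ⟨hc0, le_of_eq hPhic⟩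
    · intro u hu
      by_contra hcu
      push_neg at hcu
      have := Phi_strictMonoOn hαc hαpos hc0 hu.1 hcu
      rw [hPhic] at this
      exact absurd hu.2 (not_le.2 this)
  have : cc α s t = c := hgreat.csSup_eq
  rw [this]; exact ⟨hgreat, hPhic⟩

lemma cc_pos (hαc : Continuous α) (hαpos : ∀ s : ℝ≥0, 0 < s → 0 < α s)
    {s t : ℝ} (hs : 0 < s) (ht : 0 ≤ t) : 0 < cc α s t :=
  ((cc_isGreatest hαc hαpos hs ht).1.1).1

lemma cc_le (hαc : Continuous α) (hαpos : ∀ s : ℝ≥0, 0 < s → 0 < α s)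
    {s t : ℝ} (hs : 0 < s) (ht : 0 ≤ t) : cc α s t ≤ s := by
  obtain ⟨hg, he⟩ := cc_isGreatest hαc hαpos hs ht
  by_contra h
  push_neg at h
  have := Phi_strictMonoOn hαc hαpos hs (hg.1.1) h
  rw [he] at this
  linarith

lemma cc_mono_s (hαc : Continuous α) (hαpos : ∀ s : ℝ≥0, 0 < s → 0 < α s)
    {s₁ s₂ t : ℝ} (hs₁ : 0 < s₁) (hs₂ : s₁ ≤ s₂) (ht : 0 ≤ t) :
    cc α s₁ t ≤ cc α s₂ t := by
  have hs₂0 : 0 < s₂ := lt_of_lt_of_le hs₁ hs₂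
  obtain ⟨hg₁, he₁⟩ := cc_isGreatest hαc hαpos hs₁ ht
  obtain ⟨hg₂, he₂⟩ := cc_isGreatest hαc hαpos hs₂0 ht
  apply hg₂.2
  refine ⟨hg₁.1.1, ?_⟩
  rw [he₁]
  have : Phi α s₁ ≤ Phi α s₂ := (Phi_strictMonoOn hαc hαpos).monotoneOn hs₁ hs₂0 hs₂
  linarith

lemma cc_anti_t (hαc : Continuous α) (hαpos : ∀ s : ℝ≥0, 0 < s → 0 < α s)
    {s t₁ t₂ : ℝ} (hs : 0 < s) (ht₁ : 0 ≤ t₁) (ht : t₁ ≤ t₂) :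
    cc α s t₂ ≤ cc α s t₁ := by
  obtain ⟨hg₁, he₁⟩ := cc_isGreatest hαc hαpos hs ht₁
  obtain ⟨hg₂, he₂⟩ := cc_isGreatest hαc hαpos hs (le_trans ht₁ ht)
  apply hg₁.2
  exact ⟨hg₂.1.1, by rw [he₂]; linarith⟩

lemma cc_tendsto_zero (hαc : Continuous α) (hαpos : ∀ s : ℝ≥0, 0 < s → 0 < α s)
    {s : ℝ} (hs : 0 < s) :
    Tendsto (fun t : ℝ => cc α s t) atTop (𝓝 0) := by
  rw [tendsto_order]
  constructor
  · intro b hb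
    filter_upwards [eventually_ge_atTop (0:ℝ)] with t ht
    exact lt_trans hb (cc_pos hαc hαpos hs ht)
  · intro b hb
    set ε := min (b/2) s with hε
    have hε0 : 0 < ε := lt_min (by linarith) hs
    filter_upwards [eventually_ge_atTop (max 0 (Phi α s - Phi α ε))] with t ht
    have ht0 : 0 ≤ t := le_trans (le_max_left _ _) ht
    have ht1 : Phi α s - Phi α ε ≤ t := le_trans (le_max_right _ _) ht
    obtain ⟨hg, he⟩ := cc_isGreatest hαc hαpos hs ht0
    have hcc : Phi α (cc α s t) ≤ Phi α ε := by rw [he]; linarith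
    have : cc α s t ≤ ε := by
      by_contra h
      push_neg at h
      exact absurd hcc (not_le.2 (Phi_strictMonoOn hαc hαpos hε0 hg.1.1 h))
    calc cc α s t ≤ ε := this
    _ ≤ b/2 := min_le_left _ _
    _ < b := by linarith

noncomputable def realb (α : ℝ≥0 → ℝ≥0) (s t : ℝ) : ℝ :=
  if 0 < s then cc α s t + s * Real.exp (-t) else 0

lemma cc_tendsto_within (hαc : Continuous α) (hαpos : ∀ s : ℝ≥0, 0 < s → 0 < α s)
    {p : ℝ × ℝ} (hp1 : 0 < p.1) (hp2 : 0 ≤ p.2) :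
    Tendsto (fun q : ℝ × ℝ => cc α q.1 q.2) (𝓝[{q : ℝ × ℝ | 0 ≤ q.1 ∧ 0 ≤ q.2}] p)
      (𝓝 (cc α p.1 p.2)) := by
  set S : Set (ℝ × ℝ) := {q : ℝ × ℝ | 0 ≤ q.1 ∧ 0 ≤ q.2} with hS
  set c₀ := cc α p.1 p.2 with hc₀
  have hc₀pos : 0 < c₀ := cc_pos hαc hαpos hp1 hp2
  have hc₀spec := (cc_isGreatest hαc hαpos hp1 hp2).2
  have hfst : ∀ᶠ q : ℝ × ℝ in 𝓝[S] p, 0 < q.1 :=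
    eventually_nhdsWithin_of_eventually_nhds
      ((continuous_fst.continuousAt (x := p)).eventually (eventually_gt_nhds hp1))
  have hsnd : ∀ᶠ q : ℝ × ℝ in 𝓝[S] p, 0 ≤ q.2 := by
    filter_upwards [self_mem_nhdsWithin] with q hq
    exact hq.2
  have hPhiCont : Tendsto (fun q : ℝ × ℝ => Phi α q.1 - q.2) (𝓝[S] p)
      (𝓝 (Phi α p.1 - p.2)) := by
    apply Tendsto.sub
    · exact ((Phi_contAt hαc hαpos hp1).comp continuous_fst.continuousAt).continuousWithinAt
    · exact continuous_snd.continuousWithinAt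
  rw [tendsto_order]
  constructor
  · intro b hb
    rcases le_or_gt b 0 with hb0 | hb0
    · filter_upwards [hfst, hsnd] with q h1 h2
      exact lt_of_le_of_lt hb0 (cc_pos hαc hαpos h1 h2)
    · have hbP : Phi α b < Phi α p.1 - p.2 := by
        rw [← hc₀spec]
        exact Phi_strictMonoOn hαc hαpos hb0 hc₀pos hb
      filter_upwards [hfst, hsnd, hPhiCont (Ioi_mem_nhds hbP)] with q h1 h2 h3
      obtain ⟨hg, he⟩ := cc_isGreatest hαc hαpos h1 h2
      by_contra h
      push_neg at h
      have := (Phi_strictMonoOn hαc hαpos).monotoneOn hg.1.1 hb0 h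
      rw [he] at this
      exact absurd h3 (not_lt.2 this)
  · intro b hb
    have hbpos : 0 < b := lt_trans hc₀pos hb
    have hbP : Phi α p.1 - p.2 < Phi α b := by
      rw [← hc₀spec]
      exact Phi_strictMonoOn hαc hαpos hc₀pos hbpos hb
    filter_upwards [hfst, hsnd, hPhiCont (Iio_mem_nhds hbP)] with q h1 h2 h3
    obtain ⟨hg, he⟩ := cc_isGreatest hαc hαpos h1 h2
    by_contra h
    push_neg at h
    have := (Phi_strictMonoOn hαc hαpos).monotoneOn hbpos hg.1.1 h
    rw [he] at this
    exact absurd h3 (not_lt.2 this)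

lemma realb_nonneg (hαc : Continuous α) (hαpos : ∀ s : ℝ≥0, 0 < s → 0 < α s)
    {s t : ℝ} (ht : 0 ≤ t) : 0 ≤ realb α s t := by
  rw [realb]
  split_ifs with h
  · have := cc_pos hαc hαpos h ht
    positivity
  · exact le_refl 0

lemma realb_le (hαc : Continuous α) (hαpos : ∀ s : ℝ≥0, 0 < s → 0 < α s)
    {s t : ℝ} (hs : 0 ≤ s) (ht : 0 ≤ t) : realb α s t ≤ 2 * s := by
  rw [realb]
  split_ifs with h
  · have h1 := cc_le hαc hαpos h ht
    have h2 : Real.exp (-t) ≤ 1 := Real.exp_le_one_iff.2 (by linarith)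
    nlinarith
  · linarith

lemma realb_contOn (hαc : Continuous α) (hαpos : ∀ s : ℝ≥0, 0 < s → 0 < α s) :
    ContinuousOn (fun q : ℝ × ℝ => realb α q.1 q.2) {q : ℝ × ℝ | 0 ≤ q.1 ∧ 0 ≤ q.2} := by
  set S : Set (ℝ × ℝ) := {q : ℝ × ℝ | 0 ≤ q.1 ∧ 0 ≤ q.2} with hS
  intro p hp
  rcases eq_or_lt_of_le hp.1 with hp1 | hp1
  · -- p.1 = 0 : squeeze to 0
    have h0 : realb α p.1 p.2 = 0 := by
      rw [realb, if_neg]; rw [← hp1]; exact lt_irrefl 0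
    have key : Tendsto (fun q : ℝ × ℝ => realb α q.1 q.2) (𝓝[S] p) (𝓝 0) := by
      apply squeeze_zero' (g := fun q : ℝ × ℝ => 2 * q.1)
      · filter_upwards [self_mem_nhdsWithin] with q hq
        exact realb_nonneg hαc hαpos hq.2
      · filter_upwards [self_mem_nhdsWithin] with q hq
        exact realb_le hαc hαpos hq.1 hq.2
      · have : Tendsto (fun q : ℝ × ℝ => 2 * q.1) (𝓝[S] p) (𝓝 (2 * p.1)) :=
          (continuous_const.mul continuous_fst).continuousWithinAt
        rw [← hp1] at this
        simpa using this
    simpa [ContinuousWithinAt, h0] using key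
  · -- p.1 > 0
    have heq : ∀ᶠ q : ℝ × ℝ in 𝓝[S] p, realb α q.1 q.2 = cc α q.1 q.2 + q.1 * Real.exp (-q.2) := by
      filter_upwards [eventually_nhdsWithin_of_eventually_nhds
        ((continuous_fst.continuousAt (x := p)).eventually (eventually_gt_nhds hp1))] with q h1
      rw [realb, if_pos h1]
    have hmain : Tendsto (fun q : ℝ × ℝ => cc α q.1 q.2 + q.1 * Real.exp (-q.2)) (𝓝[S] p)
        (𝓝 (cc α p.1 p.2 + p.1 * Real.exp (-p.2))) := by
      apply Tendsto.add (cc_tendsto_within hαc hαpos hp1 hp.2)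
      exact (continuous_fst.mul ((Real.continuous_exp).comp continuous_snd.neg)).continuousWithinAt
    have hval : realb α p.1 p.2 = cc α p.1 p.2 + p.1 * Real.exp (-p.2) := by
      rw [realb, if_pos hp1]
    have key : Tendsto (fun q : ℝ × ℝ => realb α q.1 q.2) (𝓝[S] p)
        (𝓝 (realb α p.1 p.2)) := by
      rw [hval]
      exact Filter.Tendsto.congr' (heq.mono fun q hq => hq.symm) hmain
    exact key

noncomputable def bKL (α : ℝ≥0 → ℝ≥0) (s t : ℝ≥0) : ℝ≥0 :=
  Real.toNNReal (realb α (s : ℝ) (t : ℝ))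

lemma bKL_classKL (hαc : Continuous α) (hαpos : ∀ s : ℝ≥0, 0 < s → 0 < α s) :
    ClassKL (bKL α) := by
  refine ⟨?_, ?_, ?_⟩
  · -- continuity
    have hcoe : Continuous (fun p : ℝ≥0 × ℝ≥0 => (((p.1 : ℝ), (p.2 : ℝ)) : ℝ × ℝ)) :=
      (NNReal.continuous_coe.comp continuous_fst).prodMk
        (NNReal.continuous_coe.comp continuous_snd)
    have := ((realb_contOn hαc hαpos).comp_continuous hcoe
      (fun p => ⟨p.1.coe_nonneg, p.2.coe_nonneg⟩))
    exact continuous_real_toNNReal.comp this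
  · intro t
    have hzero : bKL α 0 t = 0 := by
      rw [bKL, realb, if_neg (by norm_num)]
      simp
    constructor
    · intro s₁ s₂ hlt
      have ht0 : (0:ℝ) ≤ (t:ℝ) := t.coe_nonneg
      have h2pos : 0 < realb α (s₂ : ℝ) (t : ℝ) := by
        rw [realb, if_pos (by exact_mod_cast (lt_of_le_of_lt zero_le hlt))]
        have h1 := cc_pos hαc hαpos (by exact_mod_cast (lt_of_le_of_lt zero_le hlt)) ht0
        positivity
      rcases eq_or_lt_of_le (zero_le : 0 ≤ s₁) with h1 | h1
      · show bKL α s₁ t < bKL α s₂ t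
        rw [← h1, hzero]
        exact Real.toNNReal_pos.2 h2pos
      · show bKL α s₁ t < bKL α s₂ t
        have h10 : (0:ℝ) < (s₁:ℝ) := by exact_mod_cast h1
        have h20 : (0:ℝ) < (s₂:ℝ) := lt_trans h10 (by exact_mod_cast hlt)
        have hltR : (s₁:ℝ) < (s₂:ℝ) := by exact_mod_cast hlt
        have : realb α (s₁:ℝ) (t:ℝ) < realb α (s₂:ℝ) (t:ℝ) := by
          rw [realb, realb, if_pos h10, if_pos h20]
          have hc := cc_mono_s hαc hαpos h10 hltR.le ht0
          have : (s₁:ℝ) * Real.exp (-(t:ℝ)) < (s₂:ℝ) * Real.exp (-(t:ℝ)) :=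
            mul_lt_mul_of_pos_right hltR (Real.exp_pos _)
          linarith
        exact Real.toNNReal_lt_toNNReal_iff h2pos |>.2 this
    · exact hzero
  · intro s
    rcases eq_or_lt_of_le (zero_le : 0 ≤ s) with h1 | h1
    · constructor
      · intro t₁ t₂ _
        rw [← h1]
        simp [bKL, realb]
      · rw [← h1]
        have hz : ∀ t : ℝ≥0, bKL α 0 t = 0 := by
          intro t; rw [bKL, realb, if_neg (by norm_num)]; simp
        have : (bKL α 0) = fun _ : ℝ≥0 => (0:ℝ≥0) := funext hz
        rw [this]
        exact tendsto_const_nhds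
    · have h10 : (0:ℝ) < (s:ℝ) := by exact_mod_cast h1
      constructor
      · intro t₁ t₂ hle
        apply Real.toNNReal_mono
        rw [realb, realb, if_pos h10, if_pos h10]
        have hleR : (t₁:ℝ) ≤ (t₂:ℝ) := by exact_mod_cast hle
        have hc := cc_anti_t hαc hαpos h10 t₁.coe_nonneg hleR
        have : (s:ℝ) * Real.exp (-(t₂:ℝ)) ≤ (s:ℝ) * Real.exp (-(t₁:ℝ)) :=
          mul_le_mul_of_nonneg_left (Real.exp_le_exp.2 (by linarith)) h10.le
        linarith
      · have hcoeT : Tendsto (fun t : ℝ≥0 => (t : ℝ)) atTop atTop :=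
          NNReal.tendsto_coe_atTop.2 tendsto_id
        have h1' : Tendsto (fun t : ℝ => realb α (s:ℝ) t) atTop (𝓝 0) := by
          have hA : Tendsto (fun t : ℝ => cc α (s:ℝ) t + (s:ℝ) * Real.exp (-t)) atTop (𝓝 0) := by
            have hB : Tendsto (fun t : ℝ => (s:ℝ) * Real.exp (-t)) atTop (𝓝 0) := by
              simpa using (Real.tendsto_exp_neg_atTop_nhds_zero.const_mul (s:ℝ))
            simpa using (cc_tendsto_zero hαc hαpos h10).add hB
          apply hA.congr
          intro t
          rw [realb, if_pos h10]
        have h2' : Tendsto (fun t : ℝ≥0 => realb α (s:ℝ) (t:ℝ)) atTop (𝓝 0) :=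
          h1'.comp hcoeT
        have := (continuous_real_toNNReal.tendsto 0).comp h2'
        simp only [Real.toNNReal_zero] at this
        exact this

lemma dini_freq {y : ℝ → ℝ} {x c : ℝ} (h : dini y x ≤ ((c : ℝ) : EReal)) {r : ℝ} (hr : c < r) :
    ∃ᶠ z in 𝓝[>] x, slope y x z < r := by
  have hlt : Filter.limsup (fun h : ℝ => (((y (x + h) - y x) / h : ℝ) : EReal)) (𝓝[>] (0 : ℝ))
      < ((r : ℝ) : EReal) := lt_of_le_of_lt h (by exact_mod_cast hr)
  have hev : ∀ᶠ h : ℝ in 𝓝[>] (0:ℝ), (((y (x + h) - y x) / h : ℝ) : EReal) < ((r : ℝ) : EReal) :=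
    eventually_lt_of_limsup_lt hlt
  have hev' : ∀ᶠ h : ℝ in 𝓝[>] (0:ℝ), slope y x (x + h) < r := by
    filter_upwards [hev, self_mem_nhdsWithin] with h hh hpos
    have : (y (x + h) - y x) / h < r := by exact_mod_cast hh
    rw [slope_def_field]
    have hne : x + h - x = h := by ring
    rw [hne]
    exact this
  have hmap : Filter.map (fun h : ℝ => x + h) (𝓝[>] (0:ℝ)) = 𝓝[>] x := by
    have := (Homeomorph.addLeft x).isEmbedding.map_nhdsWithin_eq (Ioi (0:ℝ)) 0
    simpa [image_const_add_Ioi] using this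
  have : ∀ᶠ z in 𝓝[>] x, slope y x z < r := by
    rw [← hmap]
    rwa [Filter.eventually_map]
  exact this.frequently

section traj

variable {T : ℝ≥0∞} {y : ℝ → ℝ}

lemma Dsub {a b : ℝ} (ha : 0 ≤ a) (hb : b ∈ {t : ℝ | 0 ≤ t ∧ ENNReal.ofReal t < T}) :
    Icc a b ⊆ {t : ℝ | 0 ≤ t ∧ ENNReal.ofReal t < T} := by
  intro x hx
  exact ⟨le_trans ha hx.1, lt_of_le_of_lt (ENNReal.ofReal_le_ofReal hx.2) hb.2⟩

lemma traj_mono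
    (hy : ContinuousOn y {t : ℝ | 0 ≤ t ∧ ENNReal.ofReal t < T})
    (hd : ∀ t ∈ {t : ℝ | 0 ≤ t ∧ ENNReal.ofReal t < T},
      dini y t ≤ ((-(α (Real.toNNReal (y t)) : ℝ) : ℝ) : EReal))
    {a b : ℝ} (ha : a ∈ {t : ℝ | 0 ≤ t ∧ ENNReal.ofReal t < T})
    (hb : b ∈ {t : ℝ | 0 ≤ t ∧ ENNReal.ofReal t < T}) (hab : a ≤ b) :
    y b ≤ y a := by
  have hsub := Dsub (T := T) ha.1 hb
  have := image_le_of_liminf_slope_right_le_deriv_boundary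
    (f := y) (a := a) (b := b) (hy.mono hsub) (le_refl (y a))
    (B := fun _ => y a) (B' := fun _ => 0) continuousOn_const
    (fun x _ => hasDerivWithinAt_const x _ (y a))
    (fun x hx r hr => dini_freq (hd x (hsub ⟨hx.1, hx.2.le⟩))
      (lt_of_le_of_lt (neg_nonpos.2 (α _).coe_nonneg) hr))
  exact this ⟨hab, le_refl b⟩

lemma traj_decay (hαc : Continuous α) (hαpos : ∀ s : ℝ≥0, 0 < s → 0 < α s)
    (hy : ContinuousOn y {t : ℝ | 0 ≤ t ∧ ENNReal.ofReal t < T})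
    (hd : ∀ t ∈ {t : ℝ | 0 ≤ t ∧ ENNReal.ofReal t < T},
      dini y t ≤ ((-(α (Real.toNNReal (y t)) : ℝ) : ℝ) : EReal))
    {b : ℝ} (hb : b ∈ {t : ℝ | 0 ≤ t ∧ ENNReal.ofReal t < T}) (hyb : 0 < y b) :
    Phi α (y b) ≤ Phi α (y 0) - b := by
  set D := {t : ℝ | 0 ≤ t ∧ ENNReal.ofReal t < T} with hD
  have h0D : (0:ℝ) ∈ D := ⟨le_refl 0, by simpa using lt_of_le_of_lt (by simp) hb.2⟩
  have hsub : Icc 0 b ⊆ D := Dsub (le_refl 0) hb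
  have hypos : ∀ x ∈ Icc (0:ℝ) b, 0 < y x := fun x hx =>
    lt_of_lt_of_le hyb (traj_mono hy hd (hsub hx) hb hx.2)
  have key := image_le_of_liminf_slope_right_le_deriv_boundary
    (f := fun x => Phi α (y x)) (a := 0) (b := b)
    (fun x hx => (Phi_contAt hαc hαpos (hypos x hx)).comp_continuousWithinAt
      ((hy.mono hsub) x hx))
    (by simp)
    (B := fun x => Phi α (y 0) - x) (B' := fun _ => (-1 : ℝ))
    (continuousOn_const.sub continuousOn_id)
    (fun x _ => by
      simpa using ((hasDerivWithinAt_id x (Ici x)).const_sub (Phi α (y 0))))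
    ?_
  · exact le_of_eq rfl |>.trans (key ⟨hb.1, le_refl b⟩)
  · -- the slope bound
    intro x hx r hr
    set v := y x with hv
    have hxD : x ∈ D := hsub ⟨hx.1, hx.2.le⟩
    have hvpos : 0 < v := hypos x ⟨hx.1, hx.2.le⟩
    have hr' : (-1:ℝ) < r := hr
    set Gx := gg α v with hGx
    have hGpos : 0 < Gx := gg_pos hαpos hvpos
    set A := (α (Real.toNNReal v) : ℝ) with hA
    have hGA : Gx ≤ A := gg_le_alpha
    rcases lt_or_ge 0 r with hr0 | hr0
    · -- easy: slope of Phi∘y is ≤ 0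
      have hev : ∀ᶠ z in 𝓝[>] x, slope (fun x => Phi α (y x)) x z < r := by
        filter_upwards [Ioc_mem_nhdsGT hx.2] with z hz
        have hzD : z ∈ D := hsub ⟨le_trans hx.1 hz.1.le, hz.2⟩
        have hyz : y z ≤ v := traj_mono hy hd hxD hzD hz.1.le
        have hyzpos : 0 < y z := hypos z ⟨le_trans hx.1 hz.1.le, hz.2⟩
        have hPhile : Phi α (y z) ≤ Phi α v :=
          (Phi_strictMonoOn hαc hαpos).monotoneOn hyzpos hvpos hyz
        rw [slope_def_field]
        apply lt_of_le_of_lt _ hr0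
        apply div_nonpos_of_nonpos_of_nonneg <;> [linarith; linarith [hz.1]]
      exact hev.frequently
    · -- main case : -1 < r ≤ 0
      set ρ := Gx * (r + 1) / 2 with hρ
      have hρpos : 0 < ρ := by
        rw [hρ]
        have h1 : 0 < r + 1 := by linarith [hr']
        positivity
      set M := Gx + ρ with hM
      -- continuity of gg at v gives a ball where gg < M
      have hggv : ContinuousAt (gg α) v := (gg_cont hαc).continuousAt
      have hball : ∀ᶠ w : ℝ in 𝓝 v, gg α w < M :=
        hggv (Iio_mem_nhds (by rw [hM]; linarith))
      obtain ⟨η, hηpos, hη⟩ := Metric.eventually_nhds_iff.1 hball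
      -- y tends to v from the right within the domain
      have hyx : Filter.Tendsto y (𝓝[>] x) (𝓝 v) := by
        have h1 : Filter.Tendsto y (𝓝[D] x) (𝓝 v) := hy x hxD
        have h2 : 𝓝[Ioc x b] x = 𝓝[>] x := nhdsWithin_Ioc_eq_nhdsGT hx.2
        rw [← h2]
        exact h1.mono_left (nhdsWithin_mono x (fun z hz =>
          hsub ⟨le_trans hx.1 hz.1.le, hz.2⟩))
      have hyclose : ∀ᶠ z in 𝓝[>] x, dist (y z) v < η :=
        hyx (Metric.ball_mem_nhds v hηpos)
      have hfreq := dini_freq (hd x hxD) (show -A < -A + ρ by linarith)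
      apply ((hfreq.and_eventually hyclose).and_eventually
        (Ioc_mem_nhdsGT hx.2)).mono
      rintro z ⟨⟨hslope, hclose⟩, hzIoc⟩
      have hzD : z ∈ D := hsub ⟨le_trans hx.1 hzIoc.1.le, hzIoc.2⟩
      have hyz : y z ≤ v := traj_mono hy hd hxD hzD hzIoc.1.le
      have hyzpos : 0 < y z := hypos z ⟨le_trans hx.1 hzIoc.1.le, hzIoc.2⟩
      have hzx : 0 < z - x := by linarith [hzIoc.1]
      -- bound on gg on [y z, v]
      have hMbound : ∀ u ∈ Icc (y z) v, gg α u ≤ M := by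
        intro u hu
        apply le_of_lt (hη _)
        rw [Real.dist_eq] at hclose ⊢
        have : |u - v| ≤ |y z - v| := by
          rw [abs_sub_comm, abs_of_nonneg (by linarith [hu.2] : 0 ≤ v - u),
            abs_sub_comm, abs_of_nonneg (by linarith [hyz] : 0 ≤ v - y z)]
          linarith [hu.1]
        linarith
      have hPhi := Phi_incr_ge hαc hαpos hyzpos hyz hMbound
      -- slope of y bound
      rw [slope_def_field] at hslope
      have hslope' : y z - v < (-A + ρ) * (z - x) := by
        rw [div_lt_iff₀ hzx] at hslope
        exact hslope
      have hMpos : 0 < M := by rw [hM]; linarith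
      -- now conclude
      rw [slope_def_field]
      rw [div_lt_iff₀ hzx]
      -- Phi (y z) - Phi v ≤ -(v - y z)/M < -(A - ρ)(z-x)/M ≤ r (z - x)
      have h1 : Phi α (y z) - Phi α v ≤ -((v - y z) / M) := by linarith
      have h2 : (A - ρ) * (z - x) < v - y z := by linarith
      have hstep : -r * M <= A - ρ := by
        rw [hM, hρ]
        nlinarith [mul_nonneg hGpos.le (sq_nonneg (1 + r)), hGA]
      have hfinal : -((v - y z) / M) < r * (z - x) := by
        rw [neg_lt, ← neg_mul, lt_div_iff₀ hMpos]
        calc -r * (z - x) * M = (-r * M) * (z - x) := by ring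
        _ ≤ (A - ρ) * (z - x) := mul_le_mul_of_nonneg_right hstep hzx.le
        _ < v - y z := h2
      linarith
end traj

theorem stmt0 (α : ℝ≥0 → ℝ≥0) (hαc : Continuous α) (hα0 : α 0 = 0)
    (hαpos : ∀ s : ℝ≥0, 0 < s → 0 < α s) :
    ∃ β : ℝ≥0 → ℝ≥0 → ℝ≥0, ClassKL β ∧
      ∀ T : ℝ≥0∞, 0 < T → ∀ y : ℝ → ℝ,
        ContinuousOn y {t : ℝ | 0 ≤ t ∧ ENNReal.ofReal t < T} →
        (∀ t ∈ {t : ℝ | 0 ≤ t ∧ ENNReal.ofReal t < T}, 0 ≤ y t) →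
        (∀ t ∈ {t : ℝ | 0 ≤ t ∧ ENNReal.ofReal t < T},
          dini y t ≤ ((-(α (Real.toNNReal (y t)) : ℝ) : ℝ) : EReal)) →
        ∀ t ∈ {t : ℝ | 0 ≤ t ∧ ENNReal.ofReal t < T},
          y t ≤ (β (Real.toNNReal (y 0)) (Real.toNNReal t) : ℝ) := by
  refine ⟨bKL α, bKL_classKL hαc hαpos, ?_⟩
  intro T hT y hy hnn hd t ht
  have h0D : (0:ℝ) ∈ {t : ℝ | 0 ≤ t ∧ ENNReal.ofReal t < T} := ⟨le_refl 0, by simpa using hT⟩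
  have hy0 : 0 ≤ y 0 := hnn 0 h0D
  have hmono : y t ≤ y 0 := traj_mono hy hd h0D ht ht.1
  rcases le_or_gt (y t) 0 with hyt | hyt
  · exact hyt.trans (bKL α _ _).coe_nonneg
  · have hy0pos : 0 < y 0 := lt_of_lt_of_le hyt hmono
    have hdecay := traj_decay hαc hαpos hy hd ht hyt
    have hbdd : BddAbove {u : ℝ | 0 < u ∧ Phi α u ≤ Phi α (y 0) - t} := by
      refine ⟨y 0, fun u hu => ?_⟩
      by_contra h
      push_neg at h
      have := Phi_strictMonoOn hαc hαpos hy0pos hu.1 h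
      have ht0 : (0:ℝ) ≤ t := ht.1
      linarith [hu.2]
    have hle : y t ≤ cc α (y 0) t := le_csSup hbdd ⟨hyt, hdecay⟩
    have hcoe_s : ((Real.toNNReal (y 0) : ℝ≥0) : ℝ) = y 0 := Real.coe_toNNReal _ hy0
    have hcoe_t : ((Real.toNNReal t : ℝ≥0) : ℝ) = t := Real.coe_toNNReal _ ht.1
    have hreal : realb α (y 0) t = cc α (y 0) t + (y 0) * Real.exp (-t) := by
      rw [realb, if_pos hy0pos]
    calc y t ≤ realb α (y 0) t := by rw [hreal]; nlinarith [Real.exp_pos (-t)]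
    _ = ((bKL α (Real.toNNReal (y 0)) (Real.toNNReal t) : ℝ≥0) : ℝ) := by
        rw [bKL, hcoe_s, hcoe_t, Real.coe_toNNReal _ (realb_nonneg hαc hαpos ht.1)]
end

section
/- Let f : C([−Δ,0],ℝⁿ) → ℝⁿ be Lipschitz on bounded sets with f(0) = 0, and let x : [−Δ, b) → ℝⁿ be a solution of ẋ(t) = f(x_t) for a.e. t ∈ [0,b) with x locally absolutely continuous on [0,b). Define, for φ ∈ C, h ∈ [0,Δ), the Driver perturbation φ_h := (θ ↦ φ(θ+h) for θ ∈ [−Δ,−h), φ(0) + (θ+h) f(φ) for θ ∈ [−h,0]). Then for each t ∈ [0,b) at which τ ↦ f(x_τ) is continuous, ‖(x_t)_h − x_{t+h}‖_∞ = o(h) as h → 0⁺. -/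
open Filter Topology Set MeasureTheory
open scoped NNReal ENNReal

/-- `f` is Lipschitz on bounded subsets of `C([-Δ,0],ℝⁿ)` (sup norm). -/
def LipOnBoundedV {n : ℕ} {Δ : ℝ}
    (f : C(Set.Icc (-Δ) (0 : ℝ), EuclideanSpace ℝ (Fin n)) → EuclideanSpace ℝ (Fin n)) :
    Prop :=
  ∀ H > (0 : ℝ), ∃ L ≥ (0 : ℝ), ∀ φ ψ, ‖φ‖ ≤ H → ‖ψ‖ ≤ H → ‖f φ - f ψ‖ ≤ L * ‖φ - ψ‖

/-- The Driver perturbation `(x_t)_h` agrees with the true history `x_{t+h}` up to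
`o(h)` in the sup norm, at every time `t` where `τ ↦ f(x_τ)` is continuous. The
solution property (local absolute continuity with a.e. derivative `f(x_t)`) is
encoded by the integral equation. -/
theorem stmt7 (n : ℕ) (Δ : ℝ) (hΔ : 0 < Δ) (b : ℝ≥0∞) (hb : 0 < b)
    (f : C(Set.Icc (-Δ) (0 : ℝ), EuclideanSpace ℝ (Fin n)) → EuclideanSpace ℝ (Fin n))
    (hf0 : f 0 = 0) (hf : LipOnBoundedV f)
    (x : ℝ → EuclideanSpace ℝ (Fin n))
    (hx : ContinuousOn x {s : ℝ | -Δ ≤ s ∧ ENNReal.ofReal s < b})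
    (X : ℝ → C(Set.Icc (-Δ) (0 : ℝ), EuclideanSpace ℝ (Fin n)))
    (hX : ∀ (t : ℝ) (θ : Set.Icc (-Δ) (0 : ℝ)), X t θ = x (t + θ))
    (hint : ∀ t ∈ {s : ℝ | 0 ≤ s ∧ ENNReal.ofReal s < b},
      IntervalIntegrable (fun τ => f (X τ)) volume 0 t)
    (hsol : ∀ t ∈ {s : ℝ | 0 ≤ s ∧ ENNReal.ofReal s < b},
      x t = x 0 + ∫ τ in (0:ℝ)..t, f (X τ))
    (t : ℝ) (ht : t ∈ {s : ℝ | 0 ≤ s ∧ ENNReal.ofReal s < b})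
    (hcont : ContinuousWithinAt (fun τ => f (X τ)) {s : ℝ | 0 ≤ s ∧ ENNReal.ofReal s < b} t) :
    Tendsto (fun h : ℝ =>
        (⨆ θ : Set.Icc (-Δ) (0 : ℝ),
          ‖(if (θ : ℝ) < -h then x (t + θ + h) else x t + ((θ : ℝ) + h) • f (X t))
            - x (t + h + θ)‖) / h)
      (𝓝[>] (0 : ℝ)) (𝓝 0) := by
  rw [Metric.tendsto_nhdsWithin_nhds]
  intro ε hε
  obtain ⟨δ₁, hδ₁, hδ₁'⟩ := Metric.tendsto_nhdsWithin_nhds.mp hcont (ε/2) (by linarith)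
  have hopen : IsOpen {s : ℝ | ENNReal.ofReal s < b} :=
    isOpen_Iio.preimage ENNReal.continuous_ofReal
  obtain ⟨δ₂, hδ₂, hδ₂'⟩ := Metric.isOpen_iff.mp hopen t ht.2
  have ht0 : (0:ℝ) ≤ t := ht.1
  refine ⟨min δ₁ δ₂ / 2, by positivity, ?_⟩
  intro h hh hd
  have hh0 : (0:ℝ) < h := hh
  rw [Real.dist_eq, sub_zero, abs_of_pos hh0] at hd
  have hhδ₁ : h < δ₁ := by have := min_le_left δ₁ δ₂; linarith
  have hhδ₂ : h < δ₂ := by have := min_le_right δ₁ δ₂; linarith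
  have key : ∀ θ : Set.Icc (-Δ) (0:ℝ),
      ‖(if (θ : ℝ) < -h then x (t + θ + h) else x t + ((θ : ℝ) + h) • f (X t))
          - x (t + h + θ)‖ ≤ h * (ε/2) := by
    intro θ
    by_cases hθ : (θ:ℝ) < -h
    · rw [if_pos hθ, show t + (θ:ℝ) + h = t + h + θ by ring, sub_self, norm_zero]
      positivity
    · rw [if_neg hθ]
      push_neg at hθ
      have hθ0 : (θ:ℝ) ≤ 0 := θ.2.2
      have hθh : 0 ≤ (θ:ℝ) + h := by linarith
      set s := t + h + (θ:ℝ) with hs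
      have hst : t ≤ s := by simp only [hs]; linarith
      have hsth : s ≤ t + h := by simp only [hs]; linarith
      have hsS : s ∈ {s : ℝ | 0 ≤ s ∧ ENNReal.ofReal s < b} := by
        refine ⟨by linarith, hδ₂' ?_⟩
        rw [Metric.mem_ball, Real.dist_eq, abs_of_nonneg (by linarith)]
        linarith
      have hint_ts : IntervalIntegrable (fun τ => f (X τ)) volume t s :=
        (hint t ht).symm.trans (hint s hsS)
      rw [hsol s hsS, hsol t ht]
      have heq : (x 0 + ∫ τ in (0:ℝ)..t, f (X τ)) + ((θ:ℝ)+h) • f (X t)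
          - (x 0 + ∫ τ in (0:ℝ)..s, f (X τ))
          = ∫ τ in t..s, (f (X t) - f (X τ)) := by
        rw [intervalIntegral.integral_sub intervalIntegrable_const hint_ts,
          intervalIntegral.integral_const,
          ← intervalIntegral.integral_interval_sub_left (hint s hsS) (hint t ht),
          show s - t = (θ:ℝ) + h by simp only [hs]; ring]
        abel
      rw [heq]
      calc ‖∫ τ in t..s, (f (X t) - f (X τ))‖ ≤ (ε/2) * |s - t| := by
            apply intervalIntegral.norm_integral_le_of_norm_le_const
            intro τ hτ
            rw [Set.uIoc_of_le hst] at hτ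
            have hτS : τ ∈ {s : ℝ | 0 ≤ s ∧ ENNReal.ofReal s < b} := by
              refine ⟨by linarith [hτ.1], hδ₂' ?_⟩
              rw [Metric.mem_ball, Real.dist_eq, abs_of_nonneg (by linarith [hτ.1])]
              linarith [hτ.2]
            have hd1 : dist τ t < δ₁ := by
              rw [Real.dist_eq, abs_of_nonneg (by linarith [hτ.1])]
              linarith [hτ.2]
            have := hδ₁' hτS hd1
            rw [norm_sub_rev]
            rw [dist_eq_norm] at this
            exact this.le
        _ ≤ h * (ε/2) := by
            rw [abs_of_nonneg (by linarith)]
            nlinarith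
  have hne : Nonempty (Set.Icc (-Δ) (0:ℝ)) := ⟨⟨0, by constructor <;> linarith⟩⟩
  have hbdd : BddAbove (Set.range fun θ : Set.Icc (-Δ) (0:ℝ) =>
      ‖(if (θ : ℝ) < -h then x (t + θ + h) else x t + ((θ : ℝ) + h) • f (X t))
          - x (t + h + θ)‖) := ⟨h * (ε/2), by rintro _ ⟨θ, rfl⟩; exact key θ⟩
  have hsup_le : (⨆ θ : Set.Icc (-Δ) (0:ℝ),
      ‖(if (θ : ℝ) < -h then x (t + θ + h) else x t + ((θ : ℝ) + h) • f (X t))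
          - x (t + h + θ)‖) ≤ h * (ε/2) := ciSup_le key
  have hsup_nonneg : (0:ℝ) ≤ ⨆ θ : Set.Icc (-Δ) (0:ℝ),
      ‖(if (θ : ℝ) < -h then x (t + θ + h) else x t + ((θ : ℝ) + h) • f (X t))
          - x (t + h + θ)‖ :=
    le_ciSup_of_le hbdd (Classical.arbitrary _) (norm_nonneg _)
  rw [Real.dist_eq, sub_zero, abs_of_nonneg (div_nonneg hsup_nonneg hh0.le)]
  rw [div_lt_iff₀ hh0]
  nlinarith
end

section
/- Let α₂, α₃ ∈ K∞ and α₄ ∈ K, and let w : [0,b) → ℝ≥0 be continuous satisfying, for every t ∈ [0,b), D⁺w(t) ≤ −α₃(a(t)) + α₄(v), where a : [0,b) → ℝ≥0 satisfies w(t) ≤ α₂(a(t)) for all t, and v ≥ 0 is a constant. Then for every t ∈ [0,b), whenever w(t) ≥ α₂ ∘ α₃⁻¹(2 α₄(v)), it holds that D⁺w(t) ≤ −(1/2)(α₃ ∘ α₂⁻¹)(w(t)). -/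
open Filter Topology Set MeasureTheory
open scoped NNReal ENNReal

/-- Class K functions. -/
def ClassK (α : ℝ≥0 → ℝ≥0) : Prop := Continuous α ∧ StrictMono α ∧ α 0 = 0

/-- Class K∞ functions. -/
def ClassKinf (α : ℝ≥0 → ℝ≥0) : Prop :=
  ClassK α ∧ Filter.Tendsto α Filter.atTop Filter.atTop

lemma kinf_surj {α : ℝ≥0 → ℝ≥0} (h : ClassKinf α) : Function.Surjective α := by
  obtain ⟨⟨hc, hm, h0⟩, ht⟩ := h
  intro y
  obtain ⟨N, hN⟩ := (Filter.tendsto_atTop.1 ht y).exists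
  have : y ∈ Set.Icc (α 0) (α N) := ⟨by rw [h0]; exact (zero_le : (0:ℝ≥0) ≤ y), hN⟩
  obtain ⟨x, _, hx⟩ := intermediate_value_Icc (zero_le : (0:ℝ≥0) ≤ N) hc.continuousOn this
  exact ⟨x, hx⟩

theorem stmt10 (α₂ α₃ α₄ : ℝ≥0 → ℝ≥0)
    (h2 : ClassKinf α₂) (h3 : ClassKinf α₃) (h4 : ClassK α₄)
    (b : ℝ≥0∞) (hb : 0 < b) (w a : ℝ → ℝ) (v : ℝ≥0)
    (hw : ContinuousOn w {t : ℝ | 0 ≤ t ∧ ENNReal.ofReal t < b})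
    (hwnn : ∀ t ∈ {t : ℝ | 0 ≤ t ∧ ENNReal.ofReal t < b}, 0 ≤ w t)
    (hann : ∀ t ∈ {t : ℝ | 0 ≤ t ∧ ENNReal.ofReal t < b}, 0 ≤ a t)
    (hwa : ∀ t ∈ {t : ℝ | 0 ≤ t ∧ ENNReal.ofReal t < b},
      w t ≤ (α₂ (Real.toNNReal (a t)) : ℝ))
    (hd : ∀ t ∈ {t : ℝ | 0 ≤ t ∧ ENNReal.ofReal t < b},
      dini w t ≤ ((-(α₃ (Real.toNNReal (a t)) : ℝ) + (α₄ v : ℝ) : ℝ) : EReal)) :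
    ∀ t ∈ {t : ℝ | 0 ≤ t ∧ ENNReal.ofReal t < b},
      (α₂ (Function.invFun α₃ (2 * α₄ v)) : ℝ) ≤ w t →
      dini w t ≤ ((-((1 / 2 : ℝ) *
        (α₃ (Function.invFun α₂ (Real.toNNReal (w t))) : ℝ)) : ℝ) : EReal) := by
  intro t ht hwt
  have sm2 := h2.1.2.1
  have sm3 := h3.1.2.1
  have ri2 : ∀ y, α₂ (Function.invFun α₂ y) = y :=
    Function.rightInverse_invFun (kinf_surj h2)
  have ri3 : ∀ y, α₃ (Function.invFun α₃ y) = y :=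
    Function.rightInverse_invFun (kinf_surj h3)
  set q : ℝ≥0 := Function.invFun α₂ (Real.toNNReal (w t)) with hq
  -- q ≤ a t (as NNReal)
  have hwa' : Real.toNNReal (w t) ≤ α₂ (Real.toNNReal (a t)) := by
    simpa using Real.toNNReal_mono (hwa t ht)
  have hqa : q ≤ Real.toNNReal (a t) := by
    have : α₂ q ≤ α₂ (Real.toNNReal (a t)) := by rw [hq, ri2]; exact hwa'
    exact sm2.le_iff_le.mp this
  -- 2 α₄ v ≤ α₃ q
  have hlow : 2 * α₄ v ≤ α₃ q := by
    have h1 : α₂ (Function.invFun α₃ (2 * α₄ v)) ≤ Real.toNNReal (w t) := by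
      simpa using Real.toNNReal_mono hwt
    have h2' : Function.invFun α₃ (2 * α₄ v) ≤ q := by
      have : α₂ (Function.invFun α₃ (2 * α₄ v)) ≤ α₂ q := by rw [hq, ri2]; exact h1
      exact sm2.le_iff_le.mp this
    calc 2 * α₄ v = α₃ (Function.invFun α₃ (2 * α₄ v)) := (ri3 _).symm
      _ ≤ α₃ q := sm3.monotone h2'
  have h3q : α₃ q ≤ α₃ (Real.toNNReal (a t)) := sm3.monotone hqa
  refine (hd t ht).trans ?_
  rw [EReal.coe_le_coe_iff]
  have hlowR : 2 * (α₄ v : ℝ) ≤ (α₃ q : ℝ) := by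
    exact_mod_cast hlow
  have h3qR : (α₃ q : ℝ) ≤ (α₃ (Real.toNNReal (a t)) : ℝ) := by exact_mod_cast h3q
  linarith
end

section
/- Let u : ℝ≥0 → ℝᵐ be Lebesgue measurable and locally essentially bounded. Then there exists a sequence (u_k) of right-continuous piecewise-constant functions u_k : ℝ≥0 → ℝᵐ such that for every T > 0, u_k → u in L¹([0,T], ℝᵐ) and sup_k ess sup_{[0,T]} |u_k| < ∞. -/
open Filter Topology Set MeasureTheory
open scoped NNReal ENNReal

section Trunc

variable {E : Type*} [NormedAddCommGroup E] [NormedSpace ℝ E]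

/-- Radial truncation to the closed ball of radius `r`. -/
noncomputable def myTrunc (r : ℝ) (x : E) : E := if ‖x‖ ≤ r then x else (r / ‖x‖) • x

lemma myTrunc_norm_le {r : ℝ} (hr : 0 ≤ r) (x : E) : ‖myTrunc r x‖ ≤ r := by
  unfold myTrunc
  split_ifs with h
  · exact h
  · push_neg at h
    have hx : (0:ℝ) < ‖x‖ := lt_of_le_of_lt hr h
    rw [norm_smul, Real.norm_eq_abs, abs_of_nonneg (div_nonneg hr hx.le),
      div_mul_cancel₀ _ hx.ne']

lemma myTrunc_sub_self {r : ℝ} (hr : 0 ≤ r) (x : E) (h : r < ‖x‖) :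
    ‖myTrunc r x - x‖ = ‖x‖ - r := by
  have hx : (0:ℝ) < ‖x‖ := lt_of_le_of_lt hr h
  unfold myTrunc
  rw [if_neg (not_le.mpr h)]
  have : (r / ‖x‖) • x - x = (r / ‖x‖ - 1) • x := by
    rw [sub_smul, one_smul]
  rw [this, norm_smul, Real.norm_eq_abs]
  have h1 : r / ‖x‖ - 1 ≤ 0 := by
    rw [sub_nonpos, div_le_one hx]; exact h.le
  rw [abs_of_nonpos h1]
  field_simp
  ring

lemma norm_myTrunc_sub_le {r : ℝ} (hr : 0 ≤ r) {x y : E} (hy : ‖y‖ ≤ r) :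
    ‖myTrunc r x - y‖ ≤ 2 * ‖x - y‖ := by
  by_cases h : ‖x‖ ≤ r
  · rw [myTrunc, if_pos h]; nlinarith [norm_nonneg (x - y)]
  · push_neg at h
    calc ‖myTrunc r x - y‖ ≤ ‖myTrunc r x - x‖ + ‖x - y‖ := by
          simpa using norm_sub_le_norm_sub_add_norm_sub (myTrunc r x) x y
      _ = (‖x‖ - r) + ‖x - y‖ := by rw [myTrunc_sub_self hr x h]
      _ ≤ (‖x‖ - ‖y‖) + ‖x - y‖ := by linarith
      _ ≤ ‖x - y‖ + ‖x - y‖ := by nlinarith [norm_sub_norm_le x y]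
      _ = 2 * ‖x - y‖ := by ring

lemma norm_myTrunc_sub_myTrunc_le {r : ℝ} (hr : 0 ≤ r) (x y : E) :
    ‖myTrunc r x - myTrunc r y‖ ≤ 2 * ‖x - y‖ := by
  by_cases hx : ‖x‖ ≤ r
  · rw [myTrunc, if_pos hx, norm_sub_rev, norm_sub_rev x y]
    exact norm_myTrunc_sub_le hr hx
  · by_cases hy : ‖y‖ ≤ r
    · rw [show myTrunc r y = y from if_pos hy]
      exact norm_myTrunc_sub_le hr hy
    · push_neg at hx hy
      have hxp : (0:ℝ) < ‖x‖ := lt_of_le_of_lt hr hx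
      have hyp : (0:ℝ) < ‖y‖ := lt_of_le_of_lt hr hy
      rw [myTrunc, if_neg (not_le.mpr hx), myTrunc, if_neg (not_le.mpr hy)]
      have key : (r / ‖x‖) • x - (r / ‖y‖) • y
          = (r / ‖x‖) • (x - y) + (r / ‖x‖ - r / ‖y‖) • y := by
        rw [smul_sub, sub_smul]; abel
      rw [key]
      have h1 : ‖(r / ‖x‖) • (x - y)‖ ≤ ‖x - y‖ := by
        rw [norm_smul, Real.norm_eq_abs, abs_of_nonneg (div_nonneg hr hxp.le)]
        have : r / ‖x‖ ≤ 1 := (div_le_one hxp).mpr hx.le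
        nlinarith [norm_nonneg (x - y)]
      have h2 : ‖(r / ‖x‖ - r / ‖y‖) • y‖ ≤ ‖x - y‖ := by
        rw [norm_smul, Real.norm_eq_abs]
        have hdiff : (r / ‖x‖ - r / ‖y‖) * ‖y‖ = (r / ‖x‖) * (‖y‖ - ‖x‖) := by
          field_simp
        rw [show |r / ‖x‖ - r / ‖y‖| * ‖y‖ = |(r / ‖x‖ - r / ‖y‖) * ‖y‖| by
            rw [abs_mul, abs_of_nonneg hyp.le], hdiff, abs_mul,
          abs_of_nonneg (div_nonneg hr hxp.le)]
        have hb : |‖y‖ - ‖x‖| ≤ ‖x - y‖ := by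
          rw [abs_sub_comm]
          exact abs_norm_sub_norm_le x y
        have : r / ‖x‖ ≤ 1 := (div_le_one hxp).mpr hx.le
        nlinarith [abs_nonneg (‖y‖ - ‖x‖)]
      calc ‖(r / ‖x‖) • (x - y) + (r / ‖x‖ - r / ‖y‖) • y‖
          ≤ ‖(r / ‖x‖) • (x - y)‖ + ‖(r / ‖x‖ - r / ‖y‖) • y‖ := norm_add_le _ _
        _ ≤ ‖x - y‖ + ‖x - y‖ := add_le_add h1 h2
        _ = 2 * ‖x - y‖ := by ring

lemma measurable_myTrunc_comp [MeasurableSpace E] [BorelSpace E]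
    {B : ℝ → ℝ} {G : ℝ → E} (hB : Measurable B) (hG : Measurable G) :
    Measurable fun t => myTrunc (B t) (G t) := by
  unfold myTrunc
  exact Measurable.ite (measurableSet_le hG.norm hB) hG (((hB.div hG.norm)).smul hG)

end Trunc


/-- The left endpoint of the grid interval of size `1/n` containing `t`. -/
noncomputable def myGrid (n : ℕ) (t : ℝ) : ℝ := (⌊t * n⌋ : ℝ) / n

lemma myGrid_le {n : ℕ} (hn : 0 < n) (t : ℝ) : myGrid n t ≤ t := by
  have hn' : (0:ℝ) < n := by exact_mod_cast hn
  rw [myGrid, div_le_iff₀ hn']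
  exact Int.floor_le _

lemma lt_myGrid_add {n : ℕ} (hn : 0 < n) (t : ℝ) : t - 1 / n < myGrid n t := by
  have hn' : (0:ℝ) < n := by exact_mod_cast hn
  rw [myGrid, lt_div_iff₀ hn']
  have : (t - 1 / n) * n = t * n - 1 := by field_simp
  rw [this]
  exact Int.sub_one_lt_floor _

lemma floor_myGrid {n : ℕ} (hn : 0 < n) (t : ℝ) : ⌊myGrid n t⌋ = ⌊t⌋ := by
  have hn' : (0:ℝ) < n := by exact_mod_cast hn
  refine le_antisymm (Int.floor_le_floor (myGrid_le hn t)) (Int.le_floor.mpr ?_)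
  rw [myGrid, le_div_iff₀ hn']
  have h : (⌊t⌋ * (n:ℤ) : ℤ) ≤ ⌊t * n⌋ := by
    refine Int.le_floor.mpr ?_
    push_cast
    exact mul_le_mul_of_nonneg_right (Int.floor_le t) hn'.le
  exact_mod_cast h

lemma myGrid_eq_of_mem_Ico {n : ℕ} (hn : 0 < n) {j : ℕ} {t : ℝ}
    (ht : t ∈ Ico ((j:ℝ)/n) (((j:ℝ)+1)/n)) : myGrid n t = (j:ℝ)/n := by
  have hn' : (0:ℝ) < n := by exact_mod_cast hn
  have h1 : (j:ℝ) ≤ t * n := (div_le_iff₀ hn').mp ht.1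
  have h2 : t * n < (j:ℝ) + 1 := (lt_div_iff₀ hn').mp ht.2
  have hfl : ⌊t * n⌋ = (j:ℤ) := Int.floor_eq_iff.mpr ⟨by exact_mod_cast h1, by exact_mod_cast h2⟩
  rw [myGrid, hfl]
  norm_num

lemma measurable_myGrid (n : ℕ) : Measurable (myGrid n) := by
  unfold myGrid
  exact (measurable_from_top.comp (Int.measurable_floor.comp (measurable_id.mul_const _))).div_const _

/-- A right-continuous piecewise-constant function on `ℝ≥0`: constant on each
right-open interval of a locally finite partition `0 = s 0 < s 1 < ⋯`, `s k → ∞`. -/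
def PCFun {m : ℕ} (f : ℝ → EuclideanSpace ℝ (Fin m)) : Prop :=
  ∃ s : ℕ → ℝ, s 0 = 0 ∧ StrictMono s ∧ Filter.Tendsto s Filter.atTop Filter.atTop ∧
    ∀ k : ℕ, ∀ t ∈ Set.Ico (s k) (s (k + 1)), f t = f (s k)


theorem stmt14 (m : ℕ) (u : ℝ → EuclideanSpace ℝ (Fin m)) (hu : Measurable u)
    (hub : ∀ T > (0 : ℝ), ∃ M : ℝ, ∀ᵐ t ∂(volume.restrict (Set.Icc 0 T)), ‖u t‖ ≤ M) :
    ∃ uk : ℕ → ℝ → EuclideanSpace ℝ (Fin m), (∀ k, PCFun (uk k)) ∧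
      ∀ T > (0 : ℝ),
        Tendsto (fun k => ∫ t in (0:ℝ)..T, ‖uk k t - u t‖) atTop (𝓝 0) ∧
        ∃ M : ℝ, ∀ k, ∀ᵐ t ∂(volume.restrict (Set.Icc 0 T)), ‖uk k t‖ ≤ M := by
  classical
  -- Step 1: monotone nonnegative essential bounds on `[0, n+1]`.
  have hM0 : ∀ n : ℕ, ∃ M : ℝ,
      ∀ᵐ t ∂(volume.restrict (Set.Icc (0:ℝ) ((n:ℝ)+1))), ‖u t‖ ≤ M :=
    fun n => hub ((n:ℝ)+1) (by positivity)
  choose M0 hM0 using hM0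
  set Mt : ℕ → ℝ := fun n => ∑ j ∈ Finset.range (n+1), max (M0 j) 0 with hMt
  have hMt_nonneg : ∀ n, 0 ≤ Mt n := fun n =>
    Finset.sum_nonneg fun j _ => le_max_right _ _
  have hMt_mono : Monotone Mt := fun a b hab =>
    Finset.sum_le_sum_of_subset_of_nonneg
      (Finset.range_subset_range.mpr (by omega)) (fun j _ _ => le_max_right _ _)
  have hMt_ge : ∀ n, M0 n ≤ Mt n := fun n =>
    (le_max_left _ _).trans
      (Finset.single_le_sum (f := fun j => max (M0 j) 0)
        (fun j _ => le_max_right _ _) (Finset.self_mem_range_succ n))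
  set B : ℝ → ℝ := fun t => Mt (⌊t⌋.toNat) with hB
  have hB_nonneg : ∀ t, 0 ≤ B t := fun t => hMt_nonneg _
  have hB_meas : Measurable B :=
    (measurable_from_top (f := fun z : ℤ => Mt z.toNat)).comp Int.measurable_floor
  have h1 : ∀ n : ℕ, ∀ᵐ t ∂(volume : Measure ℝ),
      t ∈ Set.Icc (0:ℝ) ((n:ℝ)+1) → ‖u t‖ ≤ M0 n :=
    fun n => (ae_restrict_iff' measurableSet_Icc).mp (hM0 n)
  have hBu : ∀ᵐ t ∂(volume : Measure ℝ), 0 ≤ t → ‖u t‖ ≤ B t := by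
    filter_upwards [ae_all_iff.mpr h1] with t ht hle
    set n := (⌊t⌋).toNat with hn
    have hfl : ((⌊t⌋).toNat : ℤ) = ⌊t⌋ := Int.toNat_of_nonneg (Int.floor_nonneg.mpr hle)
    have htmem : t ∈ Set.Icc (0:ℝ) ((n:ℝ)+1) := by
      refine ⟨hle, ?_⟩
      have h2 : t < (⌊t⌋ : ℝ) + 1 := Int.lt_floor_add_one t
      have : ((n:ℤ):ℝ) = ((⌊t⌋ : ℤ) : ℝ) := by exact_mod_cast hfl
      push_cast at this ⊢
      linarith [this ▸ h2]
    exact (ht n htmem).trans (hMt_ge n)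
  -- Step 2: truncated indicator approximants.
  set fK : ℕ → ℝ → EuclideanSpace ℝ (Fin m) := fun k => (Set.Icc (0:ℝ) ((k:ℝ)+1)).indicator u with hfK
  have hfK_int : ∀ k, Integrable (fK k) volume := by
    intro k
    refine Integrable.mono'
      (g := (Set.Icc (0:ℝ) ((k:ℝ)+1)).indicator fun _ => max (M0 k) 0) ?_ ?_ ?_
    · exact (integrable_indicator_iff measurableSet_Icc).mpr
        (integrableOn_const measure_Icc_lt_top.ne)
    · exact (hu.indicator measurableSet_Icc).aestronglyMeasurable
    · filter_upwards [h1 k] with t ht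
      by_cases hmem : t ∈ Set.Icc (0:ℝ) ((k:ℝ)+1)
      · simp only [hfK, Set.indicator_of_mem hmem]
        exact (ht hmem).trans (le_max_left _ _)
      · simp [hfK, Set.indicator_of_notMem hmem]
  -- Step 3: choose continuous approximations and fine grids.
  have key : ∀ k : ℕ, ∃ (g : ℝ → EuclideanSpace ℝ (Fin m)) (n : ℕ), Continuous g ∧ 0 < n ∧
      Integrable g volume ∧
      (∫ x, ‖fK k x - g x‖ ∂volume) ≤ 1/((k:ℝ)+1) ∧
      ∀ t : ℝ, ‖g (myGrid n t) - g t‖ ≤ 1/((k:ℝ)+1) := by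
    intro k
    obtain ⟨g, hgs, hgi, hgc, hgint⟩ :=
      (hfK_int k).exists_hasCompactSupport_integral_sub_le
        (ε := 1/((k:ℝ)+1)) (by positivity)
    have hgu : UniformContinuous g := hgs.uniformContinuous_of_continuous hgc
    rw [Metric.uniformContinuous_iff] at hgu
    obtain ⟨δ, hδ, hδ'⟩ := hgu (1/((k:ℝ)+1)) (by positivity)
    obtain ⟨n, hn⟩ := exists_nat_one_div_lt hδ
    refine ⟨g, n+1, hgc, n.succ_pos, hgint, hgi, fun t => ?_⟩
    refine le_of_lt ?_
    rw [← dist_eq_norm]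
    refine hδ' ?_
    rw [Real.dist_eq, abs_sub_comm, abs_of_nonneg (by linarith [myGrid_le n.succ_pos t])]
    have := lt_myGrid_add n.succ_pos t
    have h2 : t - myGrid (n+1) t < 1/((n:ℝ)+1) := by push_cast at this ⊢; linarith
    linarith
  choose g nk hgc hnk hgint hgi hgucont using key
  -- The approximating sequence.
  refine ⟨fun k t => myTrunc (B (myGrid (nk k) t)) (g k (myGrid (nk k) t)), ?_, ?_⟩
  · -- PCFun
    intro k
    have hn' : (0:ℝ) < nk k := by exact_mod_cast hnk k
    refine ⟨fun j => (j:ℝ)/(nk k), by simp, ?_, ?_, ?_⟩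
    · intro a b hab
      rw [div_lt_div_iff₀ hn' hn']
      have : (a:ℝ) < b := by exact_mod_cast hab
      nlinarith
    · exact Tendsto.atTop_div_const hn' tendsto_natCast_atTop_atTop
    · intro j t ht
      have hj : ((j:ℝ)+1)/(nk k) = ((j+1 : ℕ):ℝ)/(nk k) := by push_cast; ring
      have hmem : t ∈ Set.Ico ((j:ℝ)/(nk k)) (((j:ℝ)+1)/(nk k)) := by
        rw [hj]; exact_mod_cast ht
      have hself : (j:ℝ)/(nk k) ∈ Set.Ico ((j:ℝ)/(nk k)) (((j:ℝ)+1)/(nk k)) := by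
        constructor
        · exact le_rfl
        · rw [div_lt_div_iff₀ hn' hn']; nlinarith
      simp only
      rw [myGrid_eq_of_mem_Ico (hnk k) hmem, myGrid_eq_of_mem_Ico (hnk k) hself]
  · -- convergence and uniform bound on `[0, T]`
    intro T hT
    set MT := Mt (⌊T⌋.toNat) with hMT
    have hBle : ∀ t : ℝ, t ≤ T → B t ≤ MT := by
      intro t htT
      exact hMt_mono (Int.toNat_le_toNat (Int.floor_le_floor htT))
    constructor
    · -- L¹ convergence
      have hT0 : (0:ℝ) ≤ T := hT.le
      set μT := volume.restrict (Set.Ioc (0:ℝ) T) with hμT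
      haveI : IsFiniteMeasure μT := ⟨by
        rw [hμT, Measure.restrict_apply_univ, Real.volume_Ioc]
        exact ENNReal.ofReal_lt_top⟩
      have hmemT : ∀ᵐ t ∂μT, t ∈ Set.Ioc (0:ℝ) T := ae_restrict_mem measurableSet_Ioc
      have huB : ∀ᵐ t ∂μT, ‖u t‖ ≤ B t := by
        filter_upwards [ae_restrict_of_ae hBu, hmemT] with t h1' h2'
        exact h1' h2'.1.le
      have hu_int : Integrable u μT := by
        refine ⟨hu.aestronglyMeasurable, HasFiniteIntegral.of_bounded (C := MT) ?_⟩
        filter_upwards [huB, hmemT] with t h1' h2'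
        exact h1'.trans (hBle t h2'.2)
      have hbound : ∀ k : ℕ, T ≤ (k:ℝ)+1 →
          (∫ t, ‖myTrunc (B (myGrid (nk k) t)) (g k (myGrid (nk k) t)) - u t‖ ∂μT)
            ≤ (2*T+2) * (1/((k:ℝ)+1)) := by
        intro k hTk
        set w : ℝ → EuclideanSpace ℝ (Fin m) :=
          fun t => myTrunc (B (myGrid (nk k) t)) (g k (myGrid (nk k) t)) with hw
        set F : ℝ → EuclideanSpace ℝ (Fin m) := fun t => myTrunc (B t) (g k t) with hF
        have hBg : ∀ t : ℝ, B (myGrid (nk k) t) = B t := fun t => by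
          rw [hB]; simp only; rw [floor_myGrid (hnk k)]
        have hF_meas : Measurable F := measurable_myTrunc_comp hB_meas (hgc k).measurable
        have hw_meas : Measurable w := by
          have hcomp : w = fun t => F (myGrid (nk k) t) := by funext t; simp only [hw, hF]
          rw [hcomp]; exact hF_meas.comp (measurable_myGrid _)
        have hF_int : Integrable F μT := by
          refine ⟨hF_meas.aestronglyMeasurable, HasFiniteIntegral.of_bounded (C := MT) ?_⟩
          filter_upwards [hmemT] with t h2'
          exact (myTrunc_norm_le (hB_nonneg t) _).trans (hBle t h2'.2)
        have hw_int : Integrable w μT := by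
          refine ⟨hw_meas.aestronglyMeasurable, HasFiniteIntegral.of_bounded (C := MT) ?_⟩
          filter_upwards [hmemT] with t h2'
          refine (myTrunc_norm_le (hB_nonneg _) _).trans ?_
          rw [hBg t]; exact hBle t h2'.2
        have hg_intT : Integrable (g k) μT := (hgint k).restrict
        have iwu : Integrable (fun t => ‖w t - u t‖) μT := (hw_int.sub hu_int).norm
        have iwF : Integrable (fun t => ‖w t - F t‖) μT := (hw_int.sub hF_int).norm
        have iFu : Integrable (fun t => ‖F t - u t‖) μT := (hF_int.sub hu_int).norm
        have igu : Integrable (fun t => ‖g k t - u t‖) μT := (hg_intT.sub hu_int).norm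
        have ifg : Integrable (fun t => ‖fK k t - g k t‖) volume :=
          ((hfK_int k).sub (hgint k)).norm
        have est1 : ∀ t : ℝ, ‖w t - F t‖ ≤ 2 * (1/((k:ℝ)+1)) := by
          intro t
          have h2' : ‖w t - F t‖ ≤ 2 * ‖g k (myGrid (nk k) t) - g k t‖ := by
            rw [hw, hF]; simp only; rw [hBg t]
            exact norm_myTrunc_sub_myTrunc_le (hB_nonneg t) _ _
          have h3' := hgucont k t
          linarith
        have est2 : ∀ᵐ t ∂μT, ‖F t - u t‖ ≤ 2 * ‖g k t - u t‖ := by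
          filter_upwards [huB] with t htB
          exact norm_myTrunc_sub_le (hB_nonneg t) htB
        have s1 : (∫ t, ‖w t - u t‖ ∂μT)
            ≤ (∫ t, ‖w t - F t‖ ∂μT) + (∫ t, ‖F t - u t‖ ∂μT) := by
          have iSum : Integrable (fun t => ‖w t - F t‖ + ‖F t - u t‖) μT := iwF.add iFu
          have h := integral_mono_ae iwu iSum
            (Filter.Eventually.of_forall fun t => norm_sub_le_norm_sub_add_norm_sub _ _ _)
          rwa [integral_add iwF iFu] at h
        have s2 : (∫ t, ‖w t - F t‖ ∂μT) ≤ T * (2 * (1/((k:ℝ)+1))) := by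
          have h := integral_mono_ae iwF
            (integrable_const (2 * (1/((k:ℝ)+1))))
            (Filter.Eventually.of_forall est1)
          rwa [integral_const, hμT, measureReal_def, Measure.restrict_apply_univ, Real.volume_Ioc, sub_zero,
            ENNReal.toReal_ofReal hT0, smul_eq_mul] at h
        have s3 : (∫ t, ‖F t - u t‖ ∂μT) ≤ 2 * (∫ t, ‖g k t - u t‖ ∂μT) := by
          have i2 : Integrable (fun t => 2 * ‖g k t - u t‖) μT := igu.const_mul 2
          have h := integral_mono_ae iFu i2 est2
          rwa [integral_const_mul] at h
        have s4 : (∫ t, ‖g k t - u t‖ ∂μT) = ∫ t, ‖fK k t - g k t‖ ∂μT := by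
          refine integral_congr_ae ?_
          filter_upwards [hmemT] with t ht'
          have hmem2 : t ∈ Set.Icc (0:ℝ) ((k:ℝ)+1) := ⟨ht'.1.le, ht'.2.trans hTk⟩
          rw [hfK]; simp only [Set.indicator_of_mem hmem2]
          rw [norm_sub_rev]
        have s5 : (∫ t, ‖fK k t - g k t‖ ∂μT) ≤ ∫ t, ‖fK k t - g k t‖ ∂volume := by
          exact setIntegral_le_integral ifg
            (Filter.Eventually.of_forall fun t => norm_nonneg _)
        have s6 := hgi k
        calc (∫ t, ‖w t - u t‖ ∂μT)
            ≤ (∫ t, ‖w t - F t‖ ∂μT) + (∫ t, ‖F t - u t‖ ∂μT) := s1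
          _ ≤ T * (2 * (1/((k:ℝ)+1))) + 2 * (1/((k:ℝ)+1)) := by
              have := s4 ▸ s3
              linarith
          _ = (2*T+2) * (1/((k:ℝ)+1)) := by ring
      refine squeeze_zero' (g := fun k : ℕ => (2*T+2) * (1/((k:ℝ)+1)))
        (Filter.Eventually.of_forall fun k =>
          intervalIntegral.integral_nonneg hT0 (fun t _ => norm_nonneg _)) ?_ ?_
      · filter_upwards [eventually_ge_atTop ⌈T⌉₊] with k hk
        have hTk : T ≤ (k:ℝ)+1 := by
          have h1' : T ≤ (⌈T⌉₊ : ℝ) := Nat.le_ceil T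
          have h2' : (⌈T⌉₊ : ℝ) ≤ (k:ℝ) := by exact_mod_cast hk
          linarith
        rw [intervalIntegral.integral_of_le hT0]
        exact hbound k hTk
      · have h0 : Tendsto (fun k : ℕ => (2*T+2) * (1/((k:ℝ)+1))) atTop (𝓝 ((2*T+2) * 0)) :=
          tendsto_one_div_add_atTop_nhds_zero_nat.const_mul _
        rwa [mul_zero] at h0
    · refine ⟨MT, fun k => ?_⟩
      filter_upwards [ae_restrict_mem measurableSet_Icc] with t ht
      calc ‖myTrunc (B (myGrid (nk k) t)) (g k (myGrid (nk k) t))‖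
          ≤ B (myGrid (nk k) t) := myTrunc_norm_le (hB_nonneg _) _
        _ = B t := by rw [hB]; simp only; rw [floor_myGrid (hnk k)]
        _ ≤ MT := hBle t ht.2
end
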